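/- The 4-uniform morphism α from {0,1,2}* to {0,1,2,3}* defined by α(0)=1013, α(1)=1023, α(2)=1032 is square-free: for every square-free word w over {0,1,2}, the image α(w) is square-free. Moreover, for every w, the image α(w) contains none of the factors 12, 20, 30. -/

import Mathlib

def SqFreeWord {α : Type*} (w : List α) : Prop :=
  ∀ x : List α, x ≠ [] → ¬ (x ++ x) <:+: w

def alphaM : Fin 3 → List (Fin 4)
  | 0 => [1,0,1,3]
  | 1 => [1,0,2,3]
  | 2 => [1,0,3,2]

lemma alphaM_len (a : Fin 3) : (alphaM a).length = 4 := by fin_cases a <;> rfl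

lemma flatten_get (w : List (Fin 3)) (k j : ℕ) (hj : j < 4) :
    ((w.map alphaM).flatten)[4*k + j]? = (w[k]?).bind fun a => (alphaM a)[j]? := by
  induction w generalizing k with
  | nil => simp
  | cons a w ih =>
    simp only [List.map_cons, List.flatten_cons]
    cases k with
    | zero =>
      rw [List.getElem?_append_left (by rw [alphaM_len]; omega)]
      simp
    | succ k =>
      rw [List.getElem?_append_right (by rw [alphaM_len]; omega)]
      have h : 4 * (k+1) + j - (alphaM a).length = 4*k + j := by rw [alphaM_len]; omega
      rw [h, ih]
      simp

lemma flatten_len (w : List (Fin 3)) : ((w.map alphaM).flatten).length = 4 * w.length := by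
  induction w with
  | nil => rfl
  | cons a w ih =>
    simp only [List.map_cons, List.flatten_cons, List.length_append, ih, alphaM_len,
      List.length_cons]
    ring

lemma fval {w : List (Fin 3)} {i : ℕ} {v : Fin 4}
    (h : ((w.map alphaM).flatten)[i]? = some v) :
    ∃ a : Fin 3, w[i/4]? = some a ∧ (alphaM a)[i % 4]? = some v := by
  have h4 : i % 4 < 4 := by omega
  have heq : 4 * (i/4) + i % 4 = i := by omega
  have hfg := flatten_get w (i/4) (i%4) h4
  rw [heq] at hfg
  rw [hfg] at h
  cases hw : w[i/4]? with
  | none => rw [hw] at h; simp at h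
  | some a => rw [hw] at h; exact ⟨a, rfl, h⟩

lemma tbl : ∀ a : Fin 3, ∀ r : Fin 4, ∀ v : Fin 4,
    (alphaM a)[(r:ℕ)]? = some v → ((v = 0 ↔ (r:ℕ) = 1) ∧ ((r:ℕ) = 0 → v = 1)) := by decide

lemma tbl3 : ∀ a : Fin 3, ∀ v : Fin 4, (alphaM a)[3]? = some v → v ≠ 1 := by decide

lemma pair_tbl : ∀ a : Fin 3, ∀ r : Fin 3, ∀ v u : Fin 4,
    (alphaM a)[(r:ℕ)]? = some v → (alphaM a)[(r:ℕ)+1]? = some u →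
    (v ≠ u ∧ ¬(v = 1 ∧ u = 2) ∧ (u = 0 → v = 1)) := by decide

lemma bind2_tbl : ∀ a b : Fin 3, (alphaM a)[2]? = (alphaM b)[2]? → a = b := by decide

lemma bind2_some : ∀ a : Fin 3, ∃ v : Fin 4, (alphaM a)[2]? = some v := by decide

lemma fzero {w : List (Fin 3)} {i : ℕ} {v : Fin 4}
    (h : ((w.map alphaM).flatten)[i]? = some v) : v = 0 ↔ i % 4 = 1 := by
  obtain ⟨a, _, hv⟩ := fval h
  have h4 : i % 4 < 4 := by omega
  exact (tbl a ⟨i % 4, h4⟩ v hv).1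

lemma fone {w : List (Fin 3)} {i : ℕ} {v : Fin 4}
    (h : ((w.map alphaM).flatten)[i]? = some v) (h0 : i % 4 = 0) : v = 1 := by
  obtain ⟨a, _, hv⟩ := fval h
  have h4 : i % 4 < 4 := by omega
  exact (tbl a ⟨i % 4, h4⟩ v hv).2 h0

lemma fpair {w : List (Fin 3)} {i : ℕ} {v u : Fin 4}
    (h : ((w.map alphaM).flatten)[i]? = some v)
    (h' : ((w.map alphaM).flatten)[i+1]? = some u) :
    v ≠ u ∧ ¬(v = 1 ∧ u = 2) ∧ (u = 0 → v = 1) := by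
  obtain ⟨a, ha, hv⟩ := fval h
  obtain ⟨b, hb, hu⟩ := fval h'
  by_cases hr : i % 4 = 3
  · have hu1 : u = 1 := fone h' (by omega)
    rw [hr] at hv
    have hv1 : v ≠ 1 := tbl3 a v hv
    subst hu1
    exact ⟨hv1, fun hc => hv1 hc.1, fun hc => absurd hc (by decide)⟩
  · have h3 : i % 4 < 3 := by omega
    have e1 : (i+1)/4 = i/4 := by omega
    have e2 : (i+1) % 4 = i % 4 + 1 := by omega
    rw [e1, ha] at hb
    have hab : a = b := Option.some.inj hb
    rw [e2, ← hab] at hu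
    exact pair_tbl a ⟨i % 4, h3⟩ v u hv hu

lemma infix_get {β : Type*} {u f : List β} (h : u <:+: f) :
    ∃ p, p + u.length ≤ f.length ∧ ∀ i, i < u.length → u[i]? = f[p+i]? := by
  obtain ⟨s, t, rfl⟩ := h
  refine ⟨s.length, by simp only [List.length_append]; omega, fun i hi => ?_⟩
  rw [List.getElem?_append_left (by simp only [List.length_append]; omega)]
  rw [List.getElem?_append_right (by omega)]
  have e : s.length + i - s.length = i := by omega
  rw [e]

lemma square_of_period {β : Type*} (w : List β) (k m : ℕ) (hm : 0 < m)
    (hlen : k + 2*m ≤ w.length) (hper : ∀ i, i < m → w[k+i]? = w[k+m+i]?) :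
    ¬ SqFreeWord w := by
  intro hw
  set x := (w.drop k).take m with hx
  have hxl : x.length = m := by
    rw [hx]; simp only [List.length_take, List.length_drop]; omega
  have hxg : ∀ j, j < m → x[j]? = w[k+j]? := by
    intro j hj
    rw [hx, List.getElem?_take, if_pos hj, List.getElem?_drop]
  have hyg : ∀ j, j < 2*m → ((w.drop k).take (2*m))[j]? = w[k+j]? := by
    intro j hj
    rw [List.getElem?_take, if_pos hj, List.getElem?_drop]
  apply hw x (by intro hx0; rw [hx0] at hxl; simp at hxl; omega)
  have hxx : x ++ x = (w.drop k).take (2*m) := by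
    apply List.ext_getElem?
    intro i
    rcases Nat.lt_or_ge i m with h1 | h1
    · rw [List.getElem?_append_left (by omega), hxg i h1, hyg i (by omega)]
    rcases Nat.lt_or_ge i (2*m) with h2 | h2
    · rw [List.getElem?_append_right (by omega), hxl, hxg (i - m) (by omega), hyg i h2]
      have e : k + i = k + m + (i - m) := by omega
      rw [e, ← hper (i - m) (by omega)]
    · rw [List.getElem?_eq_none (by simp only [List.length_append, hxl]; omega),
        List.getElem?_eq_none (by simp only [List.length_take, List.length_drop]; omega)]
  rw [hxx]
  exact ((List.take_prefix _ _).isInfix).trans ((List.drop_suffix _ _).isInfix)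

theorem stmt11 :
    (∀ w : List (Fin 3), SqFreeWord w → SqFreeWord (w.map alphaM).flatten) ∧
    (∀ w : List (Fin 3),
      ¬ ([1,2] : List (Fin 4)) <:+: (w.map alphaM).flatten ∧
      ¬ ([2,0] : List (Fin 4)) <:+: (w.map alphaM).flatten ∧
      ¬ ([3,0] : List (Fin 4)) <:+: (w.map alphaM).flatten) := by
  constructor
  · intro w hw x hne hinf
    obtain ⟨p, hlen, hg⟩ := infix_get hinf
    have hxx : (x ++ x).length = 2 * x.length := by
      simp only [List.length_append]; ring
    set n := x.length with hn
    have hn1 : 1 ≤ n := List.length_pos_iff.mpr hne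
    rw [hxx, flatten_len] at hlen
    rw [hxx] at hg
    have hper : ∀ i, i < n →
        ((w.map alphaM).flatten)[p+i]? = ((w.map alphaM).flatten)[p+n+i]? := by
      intro i hi
      have e1 : (x ++ x)[i]? = x[i]? := List.getElem?_append_left (by omega)
      have e2 : (x ++ x)[n+i]? = x[i]? := by
        rw [List.getElem?_append_right (by omega)]
        congr 1
        omega
      have g1 := hg i (by omega)
      have g2 := hg (n+i) (by omega)
      rw [e1] at g1
      rw [e2] at g2
      have e3 : p + n + i = p + (n + i) := by omega
      rw [e3, ← g1, ← g2]
    have hsome : ∀ i, i < 2*n → ∃ v, ((w.map alphaM).flatten)[p+i]? = some v := by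
      intro i hi
      have hpi : p + i < ((w.map alphaM).flatten).length := by rw [flatten_len]; omega
      exact ⟨_, List.getElem?_eq_getElem hpi⟩
    rcases Nat.lt_or_ge n 2 with hsmall | hbig
    · -- n = 1 : adjacent equal letters, impossible
      have hn1' : n = 1 := by omega
      obtain ⟨v, hv⟩ := hsome 0 (by omega)
      obtain ⟨u, hu⟩ := hsome 1 (by omega)
      have hv' : ((w.map alphaM).flatten)[p]? = some v := hv
      have hvu : v = u := by
        have hp := hper 0 (by omega)
        rw [hn1'] at hp
        simp only [Nat.add_zero] at hp
        rw [hv'] at hp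
        have : ((w.map alphaM).flatten)[p+1]? = some v := hp.symm
        rw [hu] at this
        exact (Option.some.inj this).symm
      exact (fpair hv' hu).1 hvu
    · -- n ≥ 2 : first show 4 ∣ n
      have hj1a : (p + (5 - p % 4) % 4) % 4 = 1 := by omega
      have hj14 : (5 - p % 4) % 4 < 4 := by omega
      obtain ⟨a, han, haj⟩ : ∃ a, a < n ∧ ((5 - p % 4) % 4 = a ∨ (5 - p % 4) % 4 = a + n) := by
        rcases Nat.lt_or_ge ((5 - p % 4) % 4) n with h | h
        · exact ⟨_, h, Or.inl rfl⟩
        · exact ⟨(5 - p % 4) % 4 - n, by omega, Or.inr (by omega)⟩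
      obtain ⟨va, hva⟩ := hsome a (by omega)
      obtain ⟨vb, hvb⟩ := hsome (a+n) (by omega)
      have hab : va = vb := by
        have hp := hper a han
        rw [hva] at hp
        have e : p + n + a = p + (a + n) := by omega
        rw [e, hvb] at hp
        exact Option.some.inj hp
      have z1 := fzero hva
      have z2 := fzero hvb
      have hn4 : n % 4 = 0 := by
        rcases haj with h | h
        · have hva0 : va = 0 := z1.mpr (by omega)
          have := z2.mp (hab ▸ hva0)
          omega
        · have hvb0 : vb = 0 := z2.mpr (by omega)
          have := z1.mp (hab ▸ hvb0)
          omega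
      -- decode a square in w
      have hk0a : p ≤ 4*((p+1)/4)+2 := by omega
      have hk0b : 4*((p+1)/4)+2 < p+4 := by omega
      refine square_of_period w ((p+1)/4) (n/4) (by omega) (by omega) ?_ hw
      intro i hi
      have hd : 4*((p+1)/4+i)+2 - p < n := by omega
      have hp := hper (4*((p+1)/4+i)+2 - p) hd
      have e1 : p + (4*((p+1)/4+i)+2 - p) = 4*((p+1)/4+i)+2 := by omega
      have e2 : p + n + (4*((p+1)/4+i)+2 - p) = 4*((p+1)/4+(n/4)+i)+2 := by omega
      rw [e1, e2] at hp
      rw [flatten_get w ((p+1)/4+i) 2 (by omega),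
        flatten_get w ((p+1)/4+(n/4)+i) 2 (by omega)] at hp
      cases ho : w[(p+1)/4+i]? with
      | none =>
        cases ho' : w[(p+1)/4+(n/4)+i]? with
        | none => rfl
        | some b =>
          rw [ho, ho'] at hp
          obtain ⟨vv, hvv⟩ := bind2_some b
          simp only [Option.bind_none, Option.bind_some, hvv] at hp
          exact absurd hp.symm (by simp)
      | some a' =>
        cases ho' : w[(p+1)/4+(n/4)+i]? with
        | none =>
          rw [ho, ho'] at hp
          obtain ⟨vv, hvv⟩ := bind2_some a'
          simp only [Option.bind_none, Option.bind_some, hvv] at hp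
          exact absurd hp (by simp)
        | some b =>
          rw [ho, ho'] at hp
          simp only [Option.bind_some] at hp
          rw [bind2_tbl a' b hp]
  · intro w
    refine ⟨?_, ?_, ?_⟩ <;> intro h <;> obtain ⟨p, hl, hg⟩ := infix_get h
    · have h0 := (hg 0 (by norm_num)).symm
      have h1 := (hg 1 (by norm_num)).symm
      rw [show (([1,2] : List (Fin 4))[0]?) = some 1 from rfl] at h0
      rw [show (([1,2] : List (Fin 4))[1]?) = some 2 from rfl] at h1
      have h0' : ((w.map alphaM).flatten)[p]? = some 1 := h0
      exact (fpair h0' h1).2.1 ⟨rfl, rfl⟩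
    · have h0 := (hg 0 (by norm_num)).symm
      have h1 := (hg 1 (by norm_num)).symm
      rw [show (([2,0] : List (Fin 4))[0]?) = some 2 from rfl] at h0
      rw [show (([2,0] : List (Fin 4))[1]?) = some 0 from rfl] at h1
      have h0' : ((w.map alphaM).flatten)[p]? = some 2 := h0
      exact absurd ((fpair h0' h1).2.2 rfl) (by decide)
    · have h0 := (hg 0 (by norm_num)).symm
      have h1 := (hg 1 (by norm_num)).symm
      rw [show (([3,0] : List (Fin 4))[0]?) = some 3 from rfl] at h0
      rw [show (([3,0] : List (Fin 4))[1]?) = some 0 from rfl] at h1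
      have h0' : ((w.map alphaM).flatten)[p]? = some 3 := h0
      exact absurd ((fpair h0' h1).2.2 rfl) (by decide)
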